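/- Consider 2k elements V_1^g, ..., V_{2k}^g and V_1^h, ..., V_{2k}^h of GL(d, ℂ) satisfying V_j^g V_{j+1}^h = Ω^{-1} V_{j+1}^h V_j^g and V_{j+1}^g V_j^h = Ω V_j^h V_{j+1}^g for 1 ≤ j ≤ 2k (indices mod 2k), with all other pairs commuting, where Ω is a primitive q-th root of unity. Then, setting Z_j = V_{2j}^h and X_j = Π_{l=1}^j V_{2l-1}^g for 1 ≤ j ≤ k-1, these satisfy Z_j X_j = Ω X_j Z_j with all other pairs among {X_j, Z_j} commuting; together with the analogous construction on even/odd swapped indices, the full algebra requires representation dimension at least q^{2(k-1)}. -/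

import Mathlib

open Matrix

namespace PTAux

set_option maxHeartbeats 1000000

variable {d : ℕ}

lemma r_mul {S T U : Matrix (Fin d) (Fin d) ℂ} {μ ν : ℂ}
    (h1 : S * T = μ • (T * S)) (h2 : S * U = ν • (U * S)) :
    S * (T * U) = (μ * ν) • (T * U * S) := by
  calc S * (T * U) = (S * T) * U := (mul_assoc _ _ _).symm
    _ = μ • (T * (S * U)) := by rw [h1, smul_mul_assoc, mul_assoc]
    _ = μ • (T * (ν • (U * S))) := by rw [h2]
    _ = (μ * ν) • (T * U * S) := by
        rw [mul_smul_comm, smul_smul, mul_assoc]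

lemma r_pow {S T : Matrix (Fin d) (Fin d) ℂ} {μ : ℂ}
    (h : S * T = μ • (T * S)) (n : ℕ) : S * T ^ n = μ ^ n • (T ^ n * S) := by
  induction n with
  | zero => simp
  | succ n ih =>
    rw [pow_succ, pow_succ]
    calc S * (T ^ n * T) = (μ ^ n * μ) • (T ^ n * T * S) := r_mul ih h
      _ = μ ^ (n + 1) • (T ^ n * T * S) := by rw [← pow_succ]

lemma r_listProd {S : Matrix (Fin d) (Fin d) ℂ} :
    ∀ (L : List (Matrix (Fin d) (Fin d) ℂ × ℂ)),
    (∀ p ∈ L, S * p.1 = p.2 • (p.1 * S)) →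
    S * (L.map Prod.fst).prod = (L.map Prod.snd).prod • ((L.map Prod.fst).prod * S)
  | [], _ => by simp
  | p :: L, h => by
    simp only [List.map_cons, List.prod_cons]
    exact r_mul (h p List.mem_cons_self)
      (r_listProd L fun x hx => h x (List.mem_cons_of_mem _ hx))

lemma smul_flip {A B : Matrix (Fin d) (Fin d) ℂ} {c : ℂ} (hc : c ≠ 0)
    (h : A = c • B) : B = c⁻¹ • A := by
  rw [h, smul_smul, inv_mul_cancel₀ hc, one_smul]

lemma commute_inv_right {A B : Matrix (Fin d) (Fin d) ℂ} (hB : IsUnit B)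
    (h : Commute A B) : Commute A B⁻¹ := by
  have hdet : IsUnit B.det := (Matrix.isUnit_iff_isUnit_det B).mp hB
  show A * B⁻¹ = B⁻¹ * A
  calc A * B⁻¹ = B⁻¹ * (B * (A * B⁻¹)) := by rw [Matrix.nonsing_inv_mul_cancel_left _ _ hdet]
    _ = B⁻¹ * ((B * A) * B⁻¹) := by rw [mul_assoc]
    _ = B⁻¹ * ((A * B) * B⁻¹) := by rw [h.eq]
    _ = B⁻¹ * A := by rw [Matrix.mul_nonsing_inv_cancel_right _ _ hdet]

lemma r_inv {S U : Matrix (Fin d) (Fin d) ℂ} {μ : ℂ} (hμ : μ ≠ 0) (hU : IsUnit U)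
    (h : S * U = μ • (U * S)) : S * U⁻¹ = μ⁻¹ • (U⁻¹ * S) := by
  have hdet : IsUnit U.det := (Matrix.isUnit_iff_isUnit_det U).mp hU
  have h2 : U⁻¹ * S = μ • (S * U⁻¹) := by
    calc U⁻¹ * S = U⁻¹ * ((S * U) * U⁻¹) := by
          rw [Matrix.mul_nonsing_inv_cancel_right _ _ hdet]
      _ = U⁻¹ * ((μ • (U * S)) * U⁻¹) := by rw [h]
      _ = μ • (U⁻¹ * (U * (S * U⁻¹))) := by
          rw [smul_mul_assoc, mul_smul_comm, mul_assoc]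
      _ = μ • (S * U⁻¹) := by rw [Matrix.nonsing_inv_mul_cancel_left _ _ hdet]
  exact smul_flip hμ h2

lemma trace_eq_zero {S T : Matrix (Fin d) (Fin d) ℂ} {μ : ℂ} (hμ : μ ≠ 1)
    (hS : IsUnit S) (h : S * T = μ • (T * S)) : T.trace = 0 := by
  have hdet : IsUnit S.det := (Matrix.isUnit_iff_isUnit_det S).mp hS
  have key : T.trace = μ * T.trace := by
    calc T.trace = (S⁻¹ * (S * T)).trace := by
          rw [Matrix.nonsing_inv_mul_cancel_left _ _ hdet]
      _ = (S⁻¹ * (μ • (T * S))).trace := by rw [h]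
      _ = μ * (S⁻¹ * (T * S)).trace := by
          rw [mul_smul_comm, trace_smul, smul_eq_mul]
      _ = μ * ((T * S) * S⁻¹).trace := by rw [trace_mul_comm]
      _ = μ * T.trace := by rw [Matrix.mul_nonsing_inv_cancel_right _ _ hdet]
  have h0 : (μ - 1) * T.trace = 0 := by linear_combination key.symm
  rcases mul_eq_zero.mp h0 with h' | h'
  · exact absurd (by linear_combination h') hμ
  · exact h'

lemma abstract_bound {ι : Type} [Fintype ι] [DecidableEq ι] {d q : ℕ} (hd : 0 < d) (hq : 1 < q)
    (Ω : ℂ) (hΩ : IsPrimitiveRoot Ω q)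
    (Y W : ι → Matrix (Fin d) (Fin d) ℂ)
    (hY : ∀ a, IsUnit (Y a)) (hW : ∀ a, IsUnit (W a))
    (hYY : ∀ a b, Commute (Y a) (Y b)) (hWW : ∀ a b, Commute (W a) (W b))
    (hrel : ∀ a b, W a * Y b = (if a = b then Ω else 1) • (Y b * W a)) :
    q ^ Fintype.card ι ≤ d := by
  classical
  have hΩ0 : Ω ≠ 0 := hΩ.ne_zero (by omega)
  have hpow0 : ∀ m : ℕ, Ω ^ m ≠ 0 := fun m => pow_ne_zero _ hΩ0
  let P : (ι → ℕ) → Matrix (Fin d) (Fin d) ℂ :=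
    fun e => (Finset.univ.toList.map fun a => Y a ^ e a).prod
  let Q : (ι → ℕ) → Matrix (Fin d) (Fin d) ℂ :=
    fun f => (Finset.univ.toList.map fun a => W a ^ f a).prod
  -- units
  have hPu : ∀ e, IsUnit (P e) := by
    intro e
    apply List.prod_isUnit
    intro m hm
    rcases List.mem_map.mp hm with ⟨b, _, rfl⟩
    exact (hY b).pow _
  have hQu : ∀ f, IsUnit (Q f) := by
    intro f
    apply List.prod_isUnit
    intro m hm
    rcases List.mem_map.mp hm with ⟨b, _, rfl⟩
    exact (hW b).pow _
  -- commutation of W a through P e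
  have hWP : ∀ a e, W a * P e = Ω ^ e a • (P e * W a) := by
    intro a e
    have key := r_listProd (S := W a)
      (Finset.univ.toList.map fun b => (Y b ^ e b, (if a = b then Ω else 1) ^ e b)) ?_
    · have h1 : ((Finset.univ.toList.map fun b =>
          ((Y b ^ e b : Matrix (Fin d) (Fin d) ℂ), (if a = b then Ω else 1) ^ e b)).map
            Prod.fst) = Finset.univ.toList.map fun b => Y b ^ e b := by
        rw [List.map_map]; rfl
      have h2 : ((Finset.univ.toList.map fun b =>
          ((Y b ^ e b : Matrix (Fin d) (Fin d) ℂ), (if a = b then Ω else 1) ^ e b)).map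
            Prod.snd).prod = Ω ^ e a := by
        rw [List.map_map]
        show (Finset.univ.toList.map fun b => (if a = b then Ω else 1) ^ e b).prod = _
        rw [Finset.prod_map_toList]
        have heq : ∀ b, (if a = b then Ω else 1) ^ e b = if a = b then Ω ^ e b else 1 := by
          intro b; split <;> simp
        rw [Finset.prod_congr rfl fun b _ => heq b, Finset.prod_ite_eq]
        simp
      rw [h1, h2] at key
      exact key
    · intro p hp
      rcases List.mem_map.mp hp with ⟨b, _, rfl⟩
      exact r_pow (hrel a b) (e b)
  -- Y a commutes with P e
  have hYP : ∀ a e, Commute (Y a) (P e) := by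
    intro a e
    apply Commute.list_prod_right
    intro x hx
    rcases List.mem_map.mp hx with ⟨b, _, rfl⟩
    exact (hYY a b).pow_right _
  -- W a commutes with Q f
  have hWQ : ∀ a f, Commute (W a) (Q f) := by
    intro a f
    apply Commute.list_prod_right
    intro x hx
    rcases List.mem_map.mp hx with ⟨b, _, rfl⟩
    exact (hWW a b).pow_right _
  -- commutation of Y a through Q f
  have hYQ : ∀ a f, Y a * Q f = (Ω ^ f a)⁻¹ • (Q f * Y a) := by
    intro a f
    have key := r_listProd (S := Y a)
      (Finset.univ.toList.map fun b => (W b ^ f b, ((if b = a then Ω else 1)⁻¹) ^ f b)) ?_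
    · have h1 : ((Finset.univ.toList.map fun b =>
          ((W b ^ f b : Matrix (Fin d) (Fin d) ℂ), ((if b = a then Ω else 1)⁻¹) ^ f b)).map
            Prod.fst) = Finset.univ.toList.map fun b => W b ^ f b := by
        rw [List.map_map]; rfl
      have h2 : ((Finset.univ.toList.map fun b =>
          ((W b ^ f b : Matrix (Fin d) (Fin d) ℂ), ((if b = a then Ω else 1)⁻¹) ^ f b)).map
            Prod.snd).prod = (Ω ^ f a)⁻¹ := by
        rw [List.map_map]
        show (Finset.univ.toList.map fun b => ((if b = a then Ω else 1)⁻¹) ^ f b).prod = _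
        rw [Finset.prod_map_toList]
        have heq : ∀ b, ((if b = a then Ω else 1)⁻¹) ^ f b
            = if b = a then (Ω ^ f b)⁻¹ else 1 := by
          intro b; split <;> simp [inv_pow]
        rw [Finset.prod_congr rfl fun b _ => heq b, Finset.prod_ite_eq']
        simp
      rw [h1, h2] at key
      exact key
    · intro p hp
      rcases List.mem_map.mp hp with ⟨b, _, rfl⟩
      have hb : Y a * W b = (if b = a then Ω else 1)⁻¹ • (W b * Y a) :=
        smul_flip (by split <;> simp [hΩ0]) (hrel b a)
      exact r_pow hb (f b)
  -- the family of monomials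
  let v : ((ι → Fin q) × (ι → Fin q)) → Matrix (Fin d) (Fin d) ℂ :=
    fun il => P (fun a => (il.1 a : ℕ)) * Q (fun a => (il.2 a : ℕ))
  have hli : LinearIndependent ℂ v := by
    rw [Fintype.linearIndependent_iff]
    intro g hg i₀
    obtain ⟨m₀, l₀⟩ := i₀
    set m₀' : ι → ℕ := fun a => (m₀ a : ℕ) with hm₀'
    set l₀' : ι → ℕ := fun a => (l₀ a : ℕ) with hl₀'
    have hPdet : IsUnit (P m₀').det := (Matrix.isUnit_iff_isUnit_det _).mp (hPu m₀')
    have hQdet : IsUnit (Q l₀').det := (Matrix.isUnit_iff_isUnit_det _).mp (hQu l₀')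
    set C : Matrix (Fin d) (Fin d) ℂ := (Q l₀')⁻¹ * (P m₀')⁻¹ with hC
    have keyeq : (v (m₀, l₀) * C).trace = (d : ℂ) := by
      have hone : v (m₀, l₀) * C = 1 := by
        show P m₀' * Q l₀' * ((Q l₀')⁻¹ * (P m₀')⁻¹) = 1
        rw [mul_assoc, ← mul_assoc (Q l₀'), Matrix.mul_nonsing_inv _ hQdet, one_mul,
          Matrix.mul_nonsing_inv _ hPdet]
      rw [hone, trace_one]
      simp
    have key : ∀ i, (v i * C).trace = if i = (m₀, l₀) then (d : ℂ) else 0 := by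
      rintro ⟨m, l⟩
      by_cases hi : (m, l) = (m₀, l₀)
      · rw [if_pos hi, hi, keyeq]
      · rw [if_neg hi]
        set m' : ι → ℕ := fun a => (m a : ℕ) with hm'
        set l' : ι → ℕ := fun a => (l a : ℕ) with hl'
        by_cases hm : m = m₀
        · -- l differs
          have hl : l ≠ l₀ := fun h => hi (by rw [hm, h])
          obtain ⟨a, ha⟩ : ∃ a, l a ≠ l₀ a := by
            by_contra hcon
            push_neg at hcon
            exact hl (funext hcon)
          have h₁ : Y a * P m' = (1 : ℂ) • (P m' * Y a) := by
            rw [one_smul]; exact (hYP a m').eq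
          have h₂ : Y a * Q l' = (Ω ^ l' a)⁻¹ • (Q l' * Y a) := hYQ a l'
          have h₃ : Y a * (Q l₀')⁻¹ = ((Ω ^ l₀' a)⁻¹)⁻¹ • ((Q l₀')⁻¹ * Y a) :=
            r_inv (inv_ne_zero (hpow0 _)) (hQu l₀') (hYQ a l₀')
          have h₄ : Y a * (P m₀')⁻¹ = (1 : ℂ) • ((P m₀')⁻¹ * Y a) := by
            rw [one_smul]
            exact (commute_inv_right (hPu m₀') (hYP a m₀')).eq
          have hfull := r_mul (r_mul h₁ h₂) (r_mul h₃ h₄)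
          have hμ1 : (1 * (Ω ^ l' a)⁻¹ * (((Ω ^ l₀' a)⁻¹)⁻¹ * 1) : ℂ) ≠ 1 := by
            rw [inv_inv, one_mul, mul_comm]
            intro hcon
            rw [mul_one] at hcon
            have heq : Ω ^ l₀' a = Ω ^ l' a := by
              field_simp at hcon
              exact hcon
            have := hΩ.pow_inj (l₀ a).2 (l a).2 heq
            exact ha (Fin.ext this.symm)
          exact trace_eq_zero hμ1 (hY a) hfull
        · obtain ⟨a, ha⟩ : ∃ a, m a ≠ m₀ a := by
            by_contra hcon
            push_neg at hcon
            exact hm (funext hcon)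
          have h₁ : W a * P m' = Ω ^ m' a • (P m' * W a) := hWP a m'
          have h₂ : W a * Q l' = (1 : ℂ) • (Q l' * W a) := by
            rw [one_smul]; exact (hWQ a l').eq
          have h₃ : W a * (Q l₀')⁻¹ = (1 : ℂ) • ((Q l₀')⁻¹ * W a) := by
            rw [one_smul]
            exact (commute_inv_right (hQu l₀') (hWQ a l₀')).eq
          have h₄ : W a * (P m₀')⁻¹ = (Ω ^ m₀' a)⁻¹ • ((P m₀')⁻¹ * W a) :=
            r_inv (hpow0 _) (hPu m₀') (hWP a m₀')
          have hfull := r_mul (r_mul h₁ h₂) (r_mul h₃ h₄)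
          have hμ1 : (Ω ^ m' a * 1 * (1 * (Ω ^ m₀' a)⁻¹) : ℂ) ≠ 1 := by
            rw [mul_one, one_mul]
            intro hcon
            have heq : Ω ^ m' a = Ω ^ m₀' a := by
              field_simp at hcon
              exact hcon
            have := hΩ.pow_inj (m a).2 (m₀ a).2 heq
            exact ha (Fin.ext this)
          exact trace_eq_zero hμ1 (hW a) hfull
    have htr : ∑ i, g i * (v i * C).trace = 0 := by
      have hgc := congrArg (fun A => (A * C).trace) hg
      simpa [Finset.sum_mul, smul_mul_assoc, Matrix.trace_sum, Matrix.trace_smul,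
        smul_eq_mul] using hgc
    rw [Finset.sum_congr rfl (fun i _ => by rw [key i])] at htr
    simp only [mul_ite, mul_zero] at htr
    rw [Finset.sum_ite_eq'] at htr
    simp only [Finset.mem_univ, if_pos] at htr
    have hd0 : (d : ℂ) ≠ 0 := Nat.cast_ne_zero.mpr hd.ne'
    exact (mul_eq_zero.mp htr).resolve_right hd0
  have hcard := hli.fintype_card_le_finrank
  have hrank : Module.finrank ℂ (Matrix (Fin d) (Fin d) ℂ) = d * d := by
    rw [Module.finrank_matrix]
    simp
  have hcard2 : Fintype.card ((ι → Fin q) × (ι → Fin q)) =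
      q ^ Fintype.card ι * q ^ Fintype.card ι := by
    simp [Fintype.card_fun]
  rw [hcard2, hrank] at hcard
  exact (Nat.pow_le_pow_iff_left (two_ne_zero)).mp
    (by rw [pow_two, pow_two]; exact hcard : (q ^ Fintype.card ι) ^ 2 ≤ d ^ 2)

lemma fin_val_add_one {n : ℕ} [NeZero n] (x : Fin n) (h : (x : ℕ) + 1 < n) :
    ((x + 1 : Fin n) : ℕ) = (x : ℕ) + 1 := by
  have h2 : (1 : ℕ) % n = 1 := Nat.mod_eq_of_lt (by omega)
  simp only [Fin.add_def, Fin.val_one', Fin.val_mk, h2]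
  exact Nat.mod_eq_of_lt h

lemma prod_fin_ite (m t : ℕ) (c : ℂ) :
    (∏ l : Fin m, if (l : ℕ) = t then c else 1) = if t < m then c else 1 := by
  by_cases h : t < m
  · rw [if_pos h, Finset.prod_eq_single (⟨t, h⟩ : Fin m)]
    · rw [if_pos rfl]
    · intro b _ hb
      rw [if_neg]
      intro hc
      exact hb (Fin.ext hc)
    · intro h'
      exact absurd (Finset.mem_univ _) h'
  · rw [if_neg h, Finset.prod_eq_one]
    intro b _
    rw [if_neg]
    intro hc
    exact h (hc ▸ b.2)

def off (s : Bool) : ℕ := cond s 1 0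

lemma off_le (s : Bool) : off s ≤ 1 := by cases s <;> simp [off]

lemma off_false : off false = 0 := rfl

lemma off_ne {s s' : Bool} (h : s ≠ s') : off s ≠ off s' := by
  cases s <;> cases s' <;> simp_all [off]

end PTAux

open Matrix in
/-- The algebra arising in the transfer matrix `𝒯̃_{2α}` of the partial transpose: `2k`
pairs `V_j^g, V_j^h` of invertible `d×d` matrices around a cycle satisfy
`V_j^g V_{j+1}^h = Ω⁻¹ V_{j+1}^h V_j^g` and `V_{j+1}^g V_j^h = Ω V_j^h V_{j+1}^g`
(indices mod `2k`), all other pairs commuting, with `Ω` a primitive `q`-th root of unity.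
Then `Z_j = V_{2j}^h` and `X_j = Π_{l=1}^j V_{2l-1}^g` (for `1 ≤ j ≤ k-1`) satisfy
`Z_j X_j = Ω X_j Z_j`, and the representation dimension satisfies `d ≥ q^{2(k-1)}`. -/
theorem partial_transpose_algebra_dimension_bound (k d q : ℕ) (hk : 2 ≤ k) (hd : 0 < d)
    (hq : 1 < q) (Ω : ℂ) (hΩ : IsPrimitiveRoot Ω q) [NeZero (2 * k)]
    (Vg Vh : Fin (2 * k) → Matrix (Fin d) (Fin d) ℂ)
    (hVg : ∀ j, IsUnit (Vg j)) (hVh : ∀ j, IsUnit (Vh j))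
    (h1 : ∀ j, Vg j * Vh (j + 1) = Ω⁻¹ • (Vh (j + 1) * Vg j))
    (h2 : ∀ j, Vg (j + 1) * Vh j = Ω • (Vh j * Vg (j + 1)))
    (hgg : ∀ i j, Commute (Vg i) (Vg j))
    (hhh : ∀ i j, Commute (Vh i) (Vh j))
    (hgh : ∀ i j : Fin (2 * k), j ≠ i + 1 → i ≠ j + 1 → Commute (Vg i) (Vh j)) :
    (∀ j : Fin k, (j : ℕ) + 1 ≤ k - 1 →
      let Zj := Vh ⟨2 * (j : ℕ) + 1, by have := j.2; omega⟩
      let Xj := (List.ofFn (fun l : Fin ((j : ℕ) + 1) =>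
        Vg ⟨2 * (l : ℕ), by have := l.2; have := j.2; omega⟩)).prod
      Zj * Xj = Ω • (Xj * Zj)) ∧
    q ^ (2 * (k - 1)) ≤ d := by
  have hΩ0 : Ω ≠ 0 := hΩ.ne_zero (by omega)
  -- the key generator-level commutation lemma
  have hWY : ∀ (s s' : Bool) (j j' : ℕ) (hj : j ≤ k - 2) (hj' : j' ≤ k - 2),
      Vh ⟨2 * j + 1 + PTAux.off s, by have := PTAux.off_le s; omega⟩ *
        (List.ofFn (fun l : Fin (j' + 1) =>
          Vg ⟨2 * (l : ℕ) + PTAux.off s', by have := l.2; have := PTAux.off_le s'; omega⟩)).prod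
      = (if s = s' ∧ j = j' then Ω else 1) •
        ((List.ofFn (fun l : Fin (j' + 1) =>
          Vg ⟨2 * (l : ℕ) + PTAux.off s', by have := l.2; have := PTAux.off_le s'; omega⟩)).prod *
          Vh ⟨2 * j + 1 + PTAux.off s, by have := PTAux.off_le s; omega⟩) := by
    intro s s' j j' hj hj'
    have hfac : ∀ p ∈ (List.ofFn (fun l : Fin (j' + 1) =>
        (Vg ⟨2 * (l : ℕ) + PTAux.off s', by have := l.2; have := PTAux.off_le s'; omega⟩,
         (if s = s' ∧ (l : ℕ) = j then Ω else 1) *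
           (if s = s' ∧ (l : ℕ) = j + 1 then Ω⁻¹ else 1)))),
        Vh ⟨2 * j + 1 + PTAux.off s, by have := PTAux.off_le s; omega⟩ * p.1 =
          p.2 • (p.1 * Vh ⟨2 * j + 1 + PTAux.off s, by have := PTAux.off_le s; omega⟩) := by
      intro p hp
      rcases List.mem_ofFn.mp hp with ⟨l, rfl⟩
      dsimp only
      by_cases hc1 : s = s' ∧ (l : ℕ) = j
      · obtain ⟨rfl, hlj⟩ := hc1
        rw [if_pos ⟨rfl, hlj⟩, if_neg (fun hcon => absurd hcon.2 (by omega)), mul_one]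
        have hrel := PTAux.smul_flip (inv_ne_zero hΩ0)
          (h1 ⟨2 * (l : ℕ) + PTAux.off s, by have := l.2; have := PTAux.off_le s; omega⟩)
        rw [inv_inv] at hrel
        have hip : (⟨2 * (l : ℕ) + PTAux.off s,
              by have := l.2; have := PTAux.off_le s; omega⟩ : Fin (2 * k)) + 1
            = ⟨2 * j + 1 + PTAux.off s, by have := PTAux.off_le s; omega⟩ := by
          apply Fin.ext
          rw [PTAux.fin_val_add_one _
            (by show 2 * (l : ℕ) + PTAux.off s + 1 < 2 * k
                have := l.2; have := PTAux.off_le s; omega)]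
          show 2 * (l : ℕ) + PTAux.off s + 1 = 2 * j + 1 + PTAux.off s
          omega
        rw [hip] at hrel
        exact hrel
      · by_cases hc2 : s = s' ∧ (l : ℕ) = j + 1
        · obtain ⟨rfl, hlj⟩ := hc2
          rw [if_neg hc1, if_pos ⟨rfl, hlj⟩, one_mul]
          have hrel := PTAux.smul_flip hΩ0
            (h2 ⟨2 * j + 1 + PTAux.off s, by have := PTAux.off_le s; omega⟩)
          have hip : (⟨2 * j + 1 + PTAux.off s,
                by have := PTAux.off_le s; omega⟩ : Fin (2 * k)) + 1
              = ⟨2 * (l : ℕ) + PTAux.off s, by have := l.2; have := PTAux.off_le s; omega⟩ := by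
            apply Fin.ext
            rw [PTAux.fin_val_add_one _
              (by show 2 * j + 1 + PTAux.off s + 1 < 2 * k
                  have := PTAux.off_le s; omega)]
            show 2 * j + 1 + PTAux.off s + 1 = 2 * (l : ℕ) + PTAux.off s
            omega
          rw [hip] at hrel
          exact hrel
        · rw [if_neg hc1, if_neg hc2, mul_one, one_smul]
          have hcomm := hgh
            ⟨2 * (l : ℕ) + PTAux.off s', by have := l.2; have := PTAux.off_le s'; omega⟩
            ⟨2 * j + 1 + PTAux.off s, by have := PTAux.off_le s; omega⟩ ?_ ?_
          · exact hcomm.symm.eq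
          · -- Vh index ≠ Vg index + 1
            intro hcon
            have hval := congrArg Fin.val hcon
            rw [PTAux.fin_val_add_one _
              (by show 2 * (l : ℕ) + PTAux.off s' + 1 < 2 * k
                  have := l.2; have := PTAux.off_le s'; omega)] at hval
            simp only [Fin.val_mk] at hval
            by_cases hss : s = s'
            · subst hss
              exact hc1 ⟨rfl, by omega⟩
            · have ha := PTAux.off_le s
              have hb := PTAux.off_le s'
              exact PTAux.off_ne hss (by omega)
          · -- Vg index ≠ Vh index + 1
            intro hcon
            have hval := congrArg Fin.val hcon
            rw [PTAux.fin_val_add_one _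
              (by show 2 * j + 1 + PTAux.off s + 1 < 2 * k
                  have := PTAux.off_le s; omega)] at hval
            simp only [Fin.val_mk] at hval
            by_cases hss : s = s'
            · subst hss
              exact hc2 ⟨rfl, by omega⟩
            · have ha := PTAux.off_le s
              have hb := PTAux.off_le s'
              exact PTAux.off_ne hss (by omega)
    have key := PTAux.r_listProd _ hfac
    rw [List.map_ofFn, List.map_ofFn] at key
    simp only [Function.comp_def] at key
    rw [List.prod_ofFn] at key
    have hsc : (∏ l : Fin (j' + 1), ((if s = s' ∧ (l : ℕ) = j then Ω else 1) *
        (if s = s' ∧ (l : ℕ) = j + 1 then Ω⁻¹ else 1))) = if s = s' ∧ j = j' then Ω else 1 := by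
      rw [Finset.prod_mul_distrib]
      by_cases hss : s = s'
      · subst hss
        simp only [true_and, eq_self_iff_true]
        rw [PTAux.prod_fin_ite, PTAux.prod_fin_ite]
        rcases Nat.lt_trichotomy j j' with h | h | h
        · rw [if_pos (by omega), if_pos (by omega), if_neg (by omega), mul_inv_cancel₀ hΩ0]
        · rw [if_pos (by omega), if_neg (by omega), if_pos (by omega), mul_one]
        · rw [if_neg (by omega), if_neg (by omega), if_neg (by omega), mul_one]
      · simp [hss]
    rw [hsc] at key
    exact key
  constructor
  · intro j hj
    intro Zj Xj
    have h := hWY false false (j : ℕ) (j : ℕ) (by omega) (by omega)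
    rw [if_pos ⟨rfl, rfl⟩] at h
    exact h
  · have hbound := PTAux.abstract_bound (ι := Bool × Fin (k - 1)) hd hq Ω hΩ
      (fun a => (List.ofFn (fun l : Fin ((a.2 : ℕ) + 1) =>
        Vg ⟨2 * (l : ℕ) + PTAux.off a.1,
          by have := l.2; have := a.2.2; have := PTAux.off_le a.1; omega⟩)).prod)
      (fun a => Vh ⟨2 * (a.2 : ℕ) + 1 + PTAux.off a.1,
          by have := a.2.2; have := PTAux.off_le a.1; omega⟩)
      ?_ ?_ ?_ ?_ ?_
    · have hcard : Fintype.card (Bool × Fin (k - 1)) = 2 * (k - 1) := by simp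
      rw [hcard] at hbound
      exact hbound
    · -- Y units
      intro a
      apply List.prod_isUnit
      intro m hm
      rcases List.mem_ofFn.mp hm with ⟨l, rfl⟩
      exact hVg _
    · -- W units
      intro a
      exact hVh _
    · -- Y commute
      intro a b
      apply Commute.list_prod_right
      intro x hx
      rcases List.mem_ofFn.mp hx with ⟨l, rfl⟩
      apply Commute.list_prod_left
      intro y hy
      rcases List.mem_ofFn.mp hy with ⟨l', rfl⟩
      exact hgg _ _
    · -- W commute
      intro a b
      exact hhh _ _
    · -- the Ω-commutation relations
      intro a b
      obtain ⟨s, j⟩ := a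
      obtain ⟨s', j'⟩ := b
      dsimp only
      have h := hWY s s' (j : ℕ) (j' : ℕ) (by have := j.2; omega) (by have := j'.2; omega)
      have hiff : ((s, j) = (s', j')) = (s = s' ∧ (j : ℕ) = (j' : ℕ)) := by
        simp [Prod.ext_iff, Fin.ext_iff]
      simp only [hiff]
      exact h
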